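/- For every n ≥ 1 and every finite set F ⊆ ℝ × ℝ whose convex hull (over ℝ) equals the zonotope Z n = { ∑_{k=0}^{n-1} t k • (1, 2^k) | t : Fin n → ℝ, ∀ k, 0 ≤ t k ∧ t k ≤ 1 }, the cardinality of F is at least 2·n. (This is the formal heart of the paper's claim that no perfect constant pruning strategy exists for the mixed fragment Lola_𝔹/𝓛𝓐: the number of points needed to describe the exact set of possible value combinations of the two relevant variables grows linearly with the number n of unknown inputs, so no representation of size bounded by a constant can be exact for all n.) -/

import Mathlib

open Finset

/-- The zonotope. -/
def ZSet (n : ℕ) : Set (ℝ × ℝ) :=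
  { z : ℝ × ℝ | ∃ t : Fin n → ℝ, (∀ k, 0 ≤ t k ∧ t k ≤ 1) ∧
      z = ∑ k, t k • (((1 : ℝ), (2 : ℝ) ^ (k : ℕ))) }

lemma sum_if_lt (n j : ℕ) (hj : j ≤ n) (f : ℕ → ℝ) :
    ∑ k : Fin n, (if (k : ℕ) < j then f k else 0) = ∑ k ∈ Finset.range j, f k := by
  rw [Fin.sum_univ_eq_sum_range (fun k => if k < j then f k else 0) n,
    ← Finset.sum_filter]
  congr 1
  ext k
  simp only [Finset.mem_filter, Finset.mem_range]
  omega

lemma sum_if_ge (n j : ℕ) (hj : j ≤ n) (f : ℕ → ℝ) :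
    ∑ k : Fin n, (if j ≤ (k : ℕ) then f k else 0) = ∑ k ∈ Finset.Ico j n, f k := by
  rw [Fin.sum_univ_eq_sum_range (fun k => if j ≤ k then f k else 0) n,
    ← Finset.sum_filter]
  congr 1
  ext k
  simp only [Finset.mem_filter, Finset.mem_range, Finset.mem_Ico]
  omega

lemma geo_sum (m : ℕ) : ∑ k ∈ Finset.range m, (2 : ℝ) ^ k = 2 ^ m - 1 := by
  rw [geom_sum_eq (by norm_num)]
  norm_num

/-- A point of `S` which is the strict unique maximiser of a linear functional is extreme. -/
lemma extreme_of_unique_max {S : Set (ℝ × ℝ)} {x : ℝ × ℝ} (a b : ℝ)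
    (hx : x ∈ S)
    (hmax : ∀ y ∈ S, a * y.1 + b * y.2 ≤ a * x.1 + b * x.2)
    (huniq : ∀ y ∈ S, a * y.1 + b * y.2 = a * x.1 + b * x.2 → y = x) :
    x ∈ Set.extremePoints ℝ S := by
  refine ⟨hx, ?_⟩
  rintro x₁ hx₁ x₂ hx₂ ⟨u, v, hu, hv, huv, heq⟩
  have h1 : x.1 = u * x₁.1 + v * x₂.1 := by
    rw [← heq]; simp [Prod.fst_add, Prod.smul_fst, smul_eq_mul]
  have h2 : x.2 = u * x₁.2 + v * x₂.2 := by
    rw [← heq]; simp [Prod.snd_add, Prod.smul_snd, smul_eq_mul]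
  have key : a * x.1 + b * x.2 =
      u * (a * x₁.1 + b * x₁.2) + v * (a * x₂.1 + b * x₂.2) := by
    rw [h1, h2]; ring
  have hM : u * (a * x.1 + b * x.2) + v * (a * x.1 + b * x.2) = a * x.1 + b * x.2 := by
    rw [← add_mul, huv, one_mul]
  have e1 : a * x₁.1 + b * x₁.2 = a * x.1 + b * x.2 := by
    by_contra h
    have l1 : a * x₁.1 + b * x₁.2 < a * x.1 + b * x.2 :=
      lt_of_le_of_ne (hmax _ hx₁) h
    have l2 : a * x₂.1 + b * x₂.2 ≤ a * x.1 + b * x.2 := hmax _ hx₂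
    linarith [mul_lt_mul_of_pos_left l1 hu, mul_le_mul_of_nonneg_left l2 hv.le]
  have e2 : a * x₂.1 + b * x₂.2 = a * x.1 + b * x.2 := by
    by_contra h
    have l2 : a * x₂.1 + b * x₂.2 < a * x.1 + b * x.2 :=
      lt_of_le_of_ne (hmax _ hx₂) h
    linarith [mul_lt_mul_of_pos_left l2 hv, mul_le_mul_of_nonneg_left (le_of_eq e1) hu.le]
  exact huniq _ hx₁ e1

/-- For a functional whose value on each generator is nonzero, the point picking exactly
the generators with positive value is the unique maximiser, hence extreme in the zonotope. -/
lemma zonotope_extreme (n : ℕ) (a b : ℝ)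
    (hne : ∀ k : ℕ, k < n → a + b * 2 ^ k ≠ 0) :
    (∑ k : Fin n, (if 0 < a + b * 2 ^ (k : ℕ) then (1 : ℝ) else 0) •
        (((1 : ℝ), (2 : ℝ) ^ (k : ℕ)))) ∈ Set.extremePoints ℝ (ZSet n) := by
  set σ : Fin n → ℝ := fun k => if 0 < a + b * 2 ^ (k : ℕ) then (1 : ℝ) else 0 with hσ
  set p : ℝ × ℝ := ∑ k : Fin n, σ k • (((1 : ℝ), (2 : ℝ) ^ (k : ℕ))) with hp
  have hval : ∀ (t : Fin n → ℝ),
      a * (∑ k : Fin n, t k • (((1 : ℝ), (2 : ℝ) ^ (k : ℕ)))).1 +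
      b * (∑ k : Fin n, t k • (((1 : ℝ), (2 : ℝ) ^ (k : ℕ)))).2 =
      ∑ k : Fin n, t k * (a + b * 2 ^ (k : ℕ)) := by
    intro t
    rw [Prod.fst_sum, Prod.snd_sum, Finset.mul_sum, Finset.mul_sum,
      ← Finset.sum_add_distrib]
    apply Finset.sum_congr rfl
    intro k _
    simp [Prod.smul_fst, Prod.smul_snd, smul_eq_mul]
    ring
  have hterm : ∀ (t : Fin n → ℝ), (∀ k, 0 ≤ t k ∧ t k ≤ 1) →
      ∀ k : Fin n, t k * (a + b * 2 ^ (k : ℕ)) ≤ σ k * (a + b * 2 ^ (k : ℕ)) := by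
    intro t ht k
    rcases lt_or_gt_of_ne (hne k k.2) with hneg | hpos
    · simp only [hσ, if_neg (not_lt.mpr (le_of_lt hneg))]
      nlinarith [(ht k).1]
    · simp only [hσ, if_pos hpos]
      nlinarith [(ht k).2]
  have hpmem : p ∈ ZSet n := by
    refine ⟨σ, fun k => ?_, rfl⟩
    by_cases h : 0 < a + b * 2 ^ (k : ℕ) <;> simp [hσ, h]
  apply extreme_of_unique_max a b hpmem
  · rintro y ⟨t, ht, rfl⟩
    rw [hval, hval]
    exact Finset.sum_le_sum (fun k _ => hterm t ht k)
  · rintro y ⟨t, ht, rfl⟩ heq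
    rw [hval, hval] at heq
    have hzero : ∑ k : Fin n,
        (σ k * (a + b * 2 ^ (k : ℕ)) - t k * (a + b * 2 ^ (k : ℕ))) = 0 := by
      rw [Finset.sum_sub_distrib, heq, sub_self]
    have hall := (Finset.sum_eq_zero_iff_of_nonneg
      (fun k _ => sub_nonneg.mpr (hterm t ht k))).mp hzero
    apply Finset.sum_congr rfl
    intro k _
    have := hall k (Finset.mem_univ k)
    have htk : t k = σ k := by
      have hw := hne k k.2
      have : (t k - σ k) * (a + b * 2 ^ (k : ℕ)) = 0 := by linarith
      rcases mul_eq_zero.mp this with h | h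
      · linarith
      · exact absurd h hw
    rw [htk]

lemma two_lt_pow_aux (j k : ℕ) : k < j ↔ (2 : ℝ) ^ k < 3 * 2 ^ j / 4 := by
  constructor
  · intro h
    have hk : k ≤ j - 1 := by omega
    have h1 : (2 : ℝ) ^ k ≤ 2 ^ (j - 1) := by
      apply pow_le_pow_right₀ (by norm_num) hk
    have h2 : (2 : ℝ) ^ (j - 1) * 2 = 2 ^ j := by
      rw [← pow_succ]; congr 1; omega
    nlinarith [pow_pos (show (0:ℝ) < 2 by norm_num) (j-1)]
  · intro h
    by_contra hc
    push_neg at hc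
    have h1 : (2 : ℝ) ^ j ≤ 2 ^ k := by
      apply pow_le_pow_right₀ (by norm_num) hc
    nlinarith [pow_pos (show (0:ℝ) < 2 by norm_num) j]

/-- The "lower" vertex `P j = (j, 2^j - 1)` is extreme in the zonotope. -/
lemma P_extreme (n j : ℕ) (hj : j ≤ n) :
    (((j : ℝ), (2 : ℝ) ^ j - 1)) ∈ Set.extremePoints ℝ (ZSet n) := by
  have key := zonotope_extreme n (3 * 2 ^ j / 4) (-1) (fun k hk => by
    rcases lt_or_ge k j with h | h
    · have := (two_lt_pow_aux j k).mp h; intro hc; nlinarith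
    · have h1 : (2 : ℝ) ^ j ≤ 2 ^ k := pow_le_pow_right₀ (by norm_num) h
      have := pow_pos (show (0:ℝ) < 2 by norm_num) j
      intro hc; nlinarith)
  convert key using 1
  have hcond : ∀ k : ℕ, (0 < 3 * 2 ^ j / 4 + (-1 : ℝ) * 2 ^ k) ↔ k < j := by
    intro k
    rw [two_lt_pow_aux j k]
    constructor <;> intro h <;> linarith
  have h1 : (∑ k : Fin n, (if 0 < 3 * 2 ^ j / 4 + (-1 : ℝ) * 2 ^ (k : ℕ) then (1:ℝ) else 0) •
      (((1 : ℝ), (2 : ℝ) ^ (k : ℕ)))) =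
      ∑ k : Fin n, (if (k : ℕ) < j then (1:ℝ) else 0) • (((1 : ℝ), (2 : ℝ) ^ (k : ℕ))) := by
    apply Finset.sum_congr rfl
    intro k _
    congr 1
    simp only [hcond]
  rw [h1]
  apply Prod.ext
  · rw [Prod.fst_sum]
    have : ∀ k : Fin n, ((if (k : ℕ) < j then (1:ℝ) else 0) •
        (((1 : ℝ), (2 : ℝ) ^ (k : ℕ)))).1 = (if (k : ℕ) < j then (1:ℝ) else 0) := by
      intro k; by_cases h : (k : ℕ) < j <;> simp [h]
    rw [Finset.sum_congr rfl (fun k _ => this k),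
      sum_if_lt n j hj (fun _ => (1:ℝ))]
    simp
  · rw [Prod.snd_sum]
    have : ∀ k : Fin n, ((if (k : ℕ) < j then (1:ℝ) else 0) •
        (((1 : ℝ), (2 : ℝ) ^ (k : ℕ)))).2 =
        (if (k : ℕ) < j then (2:ℝ) ^ (k:ℕ) else 0) := by
      intro k; by_cases h : (k : ℕ) < j <;> simp [h]
    rw [Finset.sum_congr rfl (fun k _ => this k),
      sum_if_lt n j hj (fun k => (2:ℝ) ^ k), geo_sum]

/-- The "upper" vertex `Q j = (n - j, 2^n - 2^j)` is extreme in the zonotope. -/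
lemma Q_extreme (n j : ℕ) (hj : j ≤ n) :
    (((n : ℝ) - j, (2 : ℝ) ^ n - 2 ^ j)) ∈ Set.extremePoints ℝ (ZSet n) := by
  have key := zonotope_extreme n (-(3 * 2 ^ j / 4)) 1 (fun k hk => by
    rcases lt_or_ge k j with h | h
    · have := (two_lt_pow_aux j k).mp h; intro hc; nlinarith
    · have h1 : (2 : ℝ) ^ j ≤ 2 ^ k := pow_le_pow_right₀ (by norm_num) h
      have := pow_pos (show (0:ℝ) < 2 by norm_num) j
      intro hc; nlinarith)
  convert key using 1
  have hcond : ∀ k : ℕ, (0 < -(3 * 2 ^ j / 4) + (1 : ℝ) * 2 ^ k) ↔ j ≤ k := by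
    intro k
    constructor
    · intro h
      by_contra hc
      push_neg at hc
      have := (two_lt_pow_aux j k).mp hc
      linarith
    · intro h
      have h1 : (2 : ℝ) ^ j ≤ 2 ^ k := pow_le_pow_right₀ (by norm_num) h
      have hp := pow_pos (show (0:ℝ) < 2 by norm_num) j
      linarith
  have h1 : (∑ k : Fin n, (if 0 < -(3 * 2 ^ j / 4) + (1 : ℝ) * 2 ^ (k : ℕ) then (1:ℝ) else 0) •
      (((1 : ℝ), (2 : ℝ) ^ (k : ℕ)))) =
      ∑ k : Fin n, (if j ≤ (k : ℕ) then (1:ℝ) else 0) • (((1 : ℝ), (2 : ℝ) ^ (k : ℕ))) := by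
    apply Finset.sum_congr rfl
    intro k _
    congr 1
    simp only [hcond]
  rw [h1]
  apply Prod.ext
  · rw [Prod.fst_sum]
    have : ∀ k : Fin n, ((if j ≤ (k : ℕ) then (1:ℝ) else 0) •
        (((1 : ℝ), (2 : ℝ) ^ (k : ℕ)))).1 = (if j ≤ (k : ℕ) then (1:ℝ) else 0) := by
      intro k; by_cases h : j ≤ (k : ℕ) <;> simp [h]
    rw [Finset.sum_congr rfl (fun k _ => this k),
      sum_if_ge n j hj (fun _ => (1:ℝ))]
    rw [Finset.sum_const, Nat.card_Ico]
    simp only [nsmul_eq_mul, mul_one]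
    rw [Nat.cast_sub hj]
  · rw [Prod.snd_sum]
    have : ∀ k : Fin n, ((if j ≤ (k : ℕ) then (1:ℝ) else 0) •
        (((1 : ℝ), (2 : ℝ) ^ (k : ℕ)))).2 =
        (if j ≤ (k : ℕ) then (2:ℝ) ^ (k:ℕ) else 0) := by
      intro k; by_cases h : j ≤ (k : ℕ) <;> simp [h]
    rw [Finset.sum_congr rfl (fun k _ => this k),
      sum_if_ge n j hj (fun k => (2:ℝ) ^ k),
      Finset.sum_Ico_eq_sub _ hj, geo_sum, geo_sum]
    ring

/-- Formal heart of the claim that no perfect constant pruning strategy exists for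
`Lola_𝔹/𝓛𝓐`: any finite set `F` whose convex hull is the zonotope `Z n` generated by
the vectors `(1, 2^k)`, `k < n`, has at least `2·n` elements. -/
theorem no_constant_exact_representation (n : ℕ) (hn : 1 ≤ n)
    (F : Finset (ℝ × ℝ))
    (hF : convexHull ℝ (F : Set (ℝ × ℝ)) =
      { z : ℝ × ℝ | ∃ t : Fin n → ℝ, (∀ k, 0 ≤ t k ∧ t k ≤ 1) ∧
        z = ∑ k, t k • (((1 : ℝ), (2 : ℝ) ^ (k : ℕ))) }) :
    2 * n ≤ F.card := by
  classical
  have hZ : convexHull ℝ (F : Set (ℝ × ℝ)) = ZSet n := hF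
  -- the candidate vertex maps
  set Pp : ℕ → ℝ × ℝ := fun j => (((j : ℝ), (2 : ℝ) ^ j - 1)) with hPp
  set Qp : ℕ → ℝ × ℝ := fun j => (((n : ℝ) - j, (2 : ℝ) ^ n - 2 ^ j)) with hQp
  have hPF : ∀ j ∈ Finset.Icc 1 n, Pp j ∈ F := by
    intro j hjm
    rw [Finset.mem_Icc] at hjm
    have h := P_extreme n j hjm.2
    rw [← hZ] at h
    exact extremePoints_convexHull_subset h
  have hQF : ∀ j ∈ Finset.Icc 1 n, Qp j ∈ F := by
    intro j hjm
    rw [Finset.mem_Icc] at hjm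
    have h := Q_extreme n j hjm.2
    rw [← hZ] at h
    exact extremePoints_convexHull_subset h
  set S : Finset (ℝ × ℝ) :=
    (Finset.Icc 1 n).image Pp ∪ (Finset.Icc 1 n).image Qp with hS
  have hSsub : S ⊆ F := by
    intro z hz
    rw [hS, Finset.mem_union] at hz
    rcases hz with hz | hz <;> rw [Finset.mem_image] at hz <;>
      obtain ⟨j, hjm, rfl⟩ := hz
    · exact hPF j hjm
    · exact hQF j hjm
  have hPinj : Set.InjOn Pp (Finset.Icc 1 n) := by
    intro i _ j _ h
    have : (i : ℝ) = j := congrArg Prod.fst h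
    exact_mod_cast this
  have hQinj : Set.InjOn Qp (Finset.Icc 1 n) := by
    intro i _ j _ h
    have : (n : ℝ) - i = (n : ℝ) - j := congrArg Prod.fst h
    have : (i : ℝ) = j := by linarith
    exact_mod_cast this
  have hdisj : Disjoint ((Finset.Icc 1 n).image Pp) ((Finset.Icc 1 n).image Qp) := by
    rw [Finset.disjoint_left]
    intro z hz1 hz2
    rw [Finset.mem_image] at hz1 hz2
    obtain ⟨j, hjm, rfl⟩ := hz1
    obtain ⟨i, him, hi⟩ := hz2
    rw [Finset.mem_Icc] at hjm him
    have h1 : (n : ℝ) - i = (j : ℝ) := congrArg Prod.fst hi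
    have h2 : (2 : ℝ) ^ n - 2 ^ i = 2 ^ j - 1 := congrArg Prod.snd hi
    have hij : i + j = n := by
      have : ((i + j : ℕ) : ℝ) = (n : ℝ) := by push_cast; linarith
      exact_mod_cast this
    have hi1 : i ≤ n - 1 := by omega
    have hj1 : j ≤ n - 1 := by omega
    have hpi : (2 : ℝ) ^ i ≤ 2 ^ (n - 1) := pow_le_pow_right₀ (by norm_num) hi1
    have hpj : (2 : ℝ) ^ j ≤ 2 ^ (n - 1) := pow_le_pow_right₀ (by norm_num) hj1
    have hpn : (2 : ℝ) ^ (n - 1) * 2 = 2 ^ n := by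
      rw [← pow_succ]; congr 1; omega
    nlinarith
  have hcard : S.card = 2 * n := by
    rw [hS, Finset.card_union_of_disjoint hdisj,
      Finset.card_image_of_injOn hPinj, Finset.card_image_of_injOn hQinj,
      Nat.card_Icc]
    omega
  calc 2 * n = S.card := hcard.symm
    _ ≤ F.card := Finset.card_le_card hSsub
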